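/- Let M be a model category, h : U → V a cofibration, and choose a relative cylinder for h: a factorization of the codiagonal V ∪_U V → V as a cofibration a : V ∪_U V → Z followed by a trivial fibration q : Z → V, with inclusions i₀, i₁ : V → V ∪_U V. Let ζ(h) : h → (a∘i₁) be the morphism of Arr(M) given by the square with top h, left h, bottom a∘i₀, right a∘i₁. Then: (1) ζ(h) is a projective (Reedy) cofibration in Arr(M); (2) the map a∘i₀ : V → Z is a trivial cofibration; (3) for a morphism g : A → B of M, g is injective with respect to ζ(h) if and only if g has the right homotopy lifting property with respect to h (a lift r : V → A of the top map together with a homotopy relative to U between g∘r and the bottom map). -/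

import Mathlib

universe v u

open CategoryTheory Limits

/-- The two-out-of-three property for a class of morphisms. -/
def TwoOutOfThree {M : Type u} [Category.{v} M] (W : MorphismProperty M) : Prop :=
  ∀ {X Y Z : M} (f : X ⟶ Y) (g : Y ⟶ Z),
    (W f → W g → W (f ≫ g)) ∧ (W g → W (f ≫ g) → W f) ∧ (W f → W (f ≫ g) → W g)

/-- Stability of a class of morphisms under retracts. -/
def StableUnderRetracts {M : Type u} [Category.{v} M] (P : MorphismProperty M) : Prop :=
  ∀ ⦃A B A' B' : M⦄ (f : A ⟶ B) (g : A' ⟶ B') (i₁ : A ⟶ A') (r₁ : A' ⟶ A)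
    (i₂ : B ⟶ B') (r₂ : B' ⟶ B),
    i₁ ≫ r₁ = 𝟙 A → i₂ ≫ r₂ = 𝟙 B → i₁ ≫ g = f ≫ i₂ → g ≫ r₂ = r₁ ≫ f →
    P g → P f

/-- A (Quillen closed) model structure on a category `M`: three classes of maps
(weak equivalences, cofibrations, fibrations) satisfying two-out-of-three,
stability under retracts, the lifting axioms and the factorization axioms. -/
structure ModelStr (M : Type u) [Category.{v} M] where
  W : MorphismProperty M
  Cof : MorphismProperty M
  Fib : MorphismProperty M
  two_of_three : TwoOutOfThree W
  w_retract : StableUnderRetracts W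
  cof_retract : StableUnderRetracts Cof
  fib_retract : StableUnderRetracts Fib
  lift_trivCof_fib : ∀ ⦃A B P Q : M⦄ (i : A ⟶ B) (p : P ⟶ Q),
    Cof i → W i → Fib p → HasLiftingProperty i p
  lift_cof_trivFib : ∀ ⦃A B P Q : M⦄ (i : A ⟶ B) (p : P ⟶ Q),
    Cof i → Fib p → W p → HasLiftingProperty i p
  factor_cof_trivFib : ∀ {P Q : M} (f : P ⟶ Q), ∃ (Z : M) (i : P ⟶ Z) (q : Z ⟶ Q),
    Cof i ∧ Fib q ∧ W q ∧ i ≫ q = f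
  factor_trivCof_fib : ∀ {P Q : M} (f : P ⟶ Q), ∃ (Z : M) (i : P ⟶ Z) (q : Z ⟶ Q),
    Cof i ∧ W i ∧ Fib q ∧ i ≫ q = f

variable {M : Type u} [Category.{v} M] [HasPushouts M]

/-- Cofibrations are exactly the maps with the left lifting property against
trivial fibrations (by the retract argument). -/
lemma cof_iff_llp (S : ModelStr M) {A B : M} (f : A ⟶ B) :
    S.Cof f ↔ ∀ ⦃P Q : M⦄ (p : P ⟶ Q), S.Fib p → S.W p → HasLiftingProperty f p := by
  constructor
  · intro hf P Q p hp hw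
    exact S.lift_cof_trivFib f p hf hp hw
  · intro H
    obtain ⟨Z, i, q, hi, hqf, hqw, hfac⟩ := S.factor_cof_trivFib f
    haveI := H q hqf hqw
    have sq : CommSq i f q (𝟙 B) := ⟨by simp [hfac]⟩
    exact S.cof_retract f i (𝟙 A) (𝟙 A) sq.lift q (by simp) sq.fac_right
      (by simp [sq.fac_left]) (by simp [hfac]) hi

/-- The pushout of a map with LLP against `p` again has LLP against `p`. -/
lemma llp_pushout_inl {U V P Q : M} (h : U ⟶ V) (p : P ⟶ Q)
    [HasLiftingProperty h p] : HasLiftingProperty (pushout.inl h h) p := by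
  constructor
  intro f g sq
  have sq' : CommSq (h ≫ f) h p (pushout.inr h h ≫ g) :=
    ⟨by rw [Category.assoc, sq.w, ← Category.assoc, pushout.condition,
          Category.assoc]⟩
  refine ⟨⟨⟨pushout.desc f sq'.lift sq'.fac_left.symm, by simp [pushout.inl_desc, pushout.inr_desc, pushout.inl_desc_assoc, pushout.inr_desc_assoc], ?_⟩⟩⟩
  apply pushout.hom_ext
  · simpa [pushout.inl_desc, pushout.inr_desc, pushout.inl_desc_assoc, pushout.inr_desc_assoc] using sq.w
  · simpa [pushout.inl_desc, pushout.inr_desc, pushout.inl_desc_assoc, pushout.inr_desc_assoc] using sq'.fac_right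

/-- The morphism `ζ(h) : h ⟶ a ∘ i₁` in the arrow category, given by the commutative
square with top `h`, left `h`, bottom `a ∘ i₀` and right `a ∘ i₁`, where
`i₀, i₁ : V ⟶ V ∪_U V` are the two inclusions into the cokernel pair of `h` and
`a : V ∪_U V ⟶ Z` is the cofibration part of a chosen relative cylinder for `h`. -/
noncomputable def zetaHom {U V Z : M} (h : U ⟶ V) (a : pushout h h ⟶ Z) :
    Arrow.mk h ⟶ Arrow.mk (pushout.inr h h ≫ a) :=
  Arrow.homMk (u := h) (v := pushout.inl h h ≫ a)
    (by simp only [Arrow.mk_hom]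
        rw [← Category.assoc, ← Category.assoc, pushout.condition])

/-- **Properties of `ζ(h)`.**  Let `M` be a model category, `h : U ⟶ V` a cofibration and
choose a relative cylinder for `h`: a factorization of the codiagonal
`V ∪_U V ⟶ V` as a cofibration `a : V ∪_U V ⟶ Z` followed by a trivial fibration
`q : Z ⟶ V`.  Then:
(1) `ζ(h)` is a projective (Reedy) cofibration in the arrow category, i.e. its top
component `h` is a cofibration and the induced map from the pushout
`V ∪_U V ⟶ Z` is a cofibration;
(2) the map `a ∘ i₀ : V ⟶ Z` is a trivial cofibration; and
(3) for any morphism `g : A ⟶ B` of `M`, `g` is injective with respect to `ζ(h)` if and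
only if `g` has the right homotopy lifting property with respect to `h` (a lift
`r : V ⟶ A` of the top map of any square, together with a homotopy `f' : Z ⟶ B` relative
to `U` between `g ∘ r` and the bottom map). -/
theorem zetaHom_properties (S : ModelStr M)
    {U V Z : M} (h : U ⟶ V) (hc : S.Cof h)
    (a : pushout h h ⟶ Z) (q : Z ⟶ V)
    (ha : S.Cof a) (hq : S.Fib q ∧ S.W q)
    (hfact : a ≫ q = pushout.desc (𝟙 V) (𝟙 V) rfl) :
    (S.Cof h ∧
      S.Cof (pushout.desc (pushout.inl h h ≫ a) (pushout.inr h h ≫ a)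
        (by rw [← Category.assoc, ← Category.assoc, pushout.condition]))) ∧
    (S.Cof (pushout.inl h h ≫ a) ∧ S.W (pushout.inl h h ≫ a)) ∧
    (∀ {A B : M} (g : A ⟶ B),
      (∀ α : Arrow.mk h ⟶ Arrow.mk g,
          ∃ β : Arrow.mk (pushout.inr h h ≫ a) ⟶ Arrow.mk g, zetaHom h a ≫ β = α) ↔
      (∀ (u : U ⟶ A) (v : V ⟶ B), u ≫ g = h ≫ v →
          ∃ r : V ⟶ A, h ≫ r = u ∧
            ∃ f' : Z ⟶ B, (pushout.inl h h ≫ a) ≫ f' = v ∧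
              (pushout.inr h h ≫ a) ≫ f' = r ≫ g)) := by
  obtain ⟨hqf, hqw⟩ := hq
  -- the induced map from the pushout is just `a`
  have hdesc : pushout.desc (pushout.inl h h ≫ a) (pushout.inr h h ≫ a)
      (by rw [← Category.assoc, ← Category.assoc, pushout.condition]) = a := by
    apply pushout.hom_ext <;> simp [pushout.inl_desc, pushout.inr_desc, pushout.inl_desc_assoc, pushout.inr_desc_assoc]
  -- (inl ≫ a) ≫ q = 𝟙 V
  have hcomp : (pushout.inl h h ≫ a) ≫ q = 𝟙 V := by
    rw [Category.assoc, hfact]; simp [pushout.inl_desc, pushout.inr_desc, pushout.inl_desc_assoc, pushout.inr_desc_assoc]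
  refine ⟨⟨hc, by rw [hdesc]; exact ha⟩, ⟨?_, ?_⟩, ?_⟩
  · -- inl ≫ a is a cofibration
    rw [cof_iff_llp]
    intro P Q p hp hw
    haveI : HasLiftingProperty h p := S.lift_cof_trivFib h p hc hp hw
    haveI : HasLiftingProperty (pushout.inl h h) p := llp_pushout_inl h p
    haveI : HasLiftingProperty a p := S.lift_cof_trivFib a p ha hp hw
    infer_instance
  · -- inl ≫ a is a weak equivalence
    have hid : S.W (𝟙 V) :=
      S.w_retract (𝟙 V) q (pushout.inl h h ≫ a) q (𝟙 V) (𝟙 V)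
        hcomp (by simp) (by simp [hcomp]) (by simp) hqw
    exact (S.two_of_three (pushout.inl h h ≫ a) q).2.1 hqw (hcomp ▸ hid)
  · -- the lifting characterization
    intro A B g
    constructor
    · intro H u v huv
      obtain ⟨β, hβ⟩ := H (Arrow.homMk (u := u) (v := v) (by simpa using huv))
      have hleft := congrArg CommaMorphism.left hβ
      have hright := congrArg CommaMorphism.right hβ
      simp only [Arrow.comp_left, Arrow.comp_right] at hleft hright
      refine ⟨β.left, ?_, β.right, ?_, ?_⟩
      · simpa [zetaHom] using hleft
      · simpa [zetaHom] using hright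
      · simpa using β.w.symm
    · intro H α
      have hw : α.left ≫ g = h ≫ α.right := by simpa using α.w
      obtain ⟨r, hr, f', hf1, hf2⟩ := H α.left α.right hw
      refine ⟨Arrow.homMk (u := r) (v := f') (by simpa using hf2.symm), ?_⟩
      apply CommaMorphism.ext
      · simpa [zetaHom] using hr
      · simpa [zetaHom] using hf1
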